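/- Let P be the transition matrix of an irreducible Markov chain with stationary distribution d > 0 and D = diag(d). If y satisfies ⟨y, Py⟩_D = ‖y‖_D², then y is a constant vector. -/
import Mathlib


/-- For an irreducible row-stochastic matrix `P` with positive stationary
distribution `d`, equality `⟨y, Py⟩_D = ‖y‖_D²` forces `y` to be constant. -/
theorem equality_forces_constant {n : Type*} [Fintype n] [DecidableEq n]
    (P : Matrix n n ℝ) (hP0 : ∀ i j, 0 ≤ P i j) (hP1 : ∀ i, ∑ j, P i j = 1)
    (hirr : ∀ i j, ∃ k : ℕ, 0 < (P ^ k) i j)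
    (d : n → ℝ) (hd0 : ∀ i, 0 < d i) (hd1 : ∑ i, d i = 1)
    (hstat : ∀ j, ∑ i, d i * P i j = d j)
    (y : n → ℝ)
    (heq : ∑ i, d i * y i * (P.mulVec y i) = ∑ i, d i * y i ^ 2) :
    ∃ c : ℝ, ∀ i, y i = c := by
  -- Dirichlet form vanishes
  have hA : ∑ i, ∑ j, d i * P i j * y i ^ 2 = ∑ i, d i * y i ^ 2 := by
    refine Finset.sum_congr rfl fun i _ => ?_
    have : ∑ j, P i j = 1 := hP1 i
    calc ∑ j, d i * P i j * y i ^ 2 = (d i * ∑ j, P i j) * y i ^ 2 := by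
          rw [Finset.mul_sum, Finset.sum_mul]
      _ = d i * y i ^ 2 := by rw [this]; ring
  have hC : ∑ i, ∑ j, d i * P i j * y j ^ 2 = ∑ i, d i * y i ^ 2 := by
    rw [Finset.sum_comm]
    refine Finset.sum_congr rfl fun j _ => ?_
    calc ∑ i, d i * P i j * y j ^ 2 = (∑ i, d i * P i j) * y j ^ 2 := by
          rw [Finset.sum_mul]
      _ = d j * y j ^ 2 := by rw [hstat j]
  have hB : ∑ i, ∑ j, d i * y i * (P i j * y j) = ∑ i, d i * y i ^ 2 := by
    rw [← heq]
    refine Finset.sum_congr rfl fun i _ => ?_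
    rw [← Finset.mul_sum]
    rfl
  have hS : ∑ i, ∑ j, d i * P i j * (y i - y j) ^ 2 = 0 := by
    have expand : ∀ i j, d i * P i j * (y i - y j) ^ 2
        = d i * P i j * y i ^ 2 - 2 * (d i * y i * (P i j * y j)) + d i * P i j * y j ^ 2 := by
      intro i j; ring
    calc ∑ i, ∑ j, d i * P i j * (y i - y j) ^ 2
        = (∑ i, ∑ j, d i * P i j * y i ^ 2)
          - 2 * (∑ i, ∑ j, d i * y i * (P i j * y j))
          + ∑ i, ∑ j, d i * P i j * y j ^ 2 := by
          simp only [expand, Finset.sum_add_distrib, Finset.sum_sub_distrib,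
            Finset.mul_sum]
      _ = 0 := by rw [hA, hB, hC]; ring
  have hterm : ∀ i j, d i * P i j * (y i - y j) ^ 2 = 0 := by
    have hnn : ∀ i ∈ Finset.univ, (0:ℝ) ≤ ∑ j, d i * P i j * (y i - y j) ^ 2 := by
      intro i _
      exact Finset.sum_nonneg fun j _ =>
        mul_nonneg (mul_nonneg (hd0 i).le (hP0 i j)) (sq_nonneg _)
    have h1 := (Finset.sum_eq_zero_iff_of_nonneg hnn).mp hS
    intro i j
    have hnn2 : ∀ j ∈ Finset.univ, (0:ℝ) ≤ d i * P i j * (y i - y j) ^ 2 := fun j _ =>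
      mul_nonneg (mul_nonneg (hd0 i).le (hP0 i j)) (sq_nonneg _)
    exact (Finset.sum_eq_zero_iff_of_nonneg hnn2).mp (h1 i (Finset.mem_univ i)) j
      (Finset.mem_univ j)
  have hstep : ∀ i j, 0 < P i j → y i = y j := by
    intro i j hp
    have := hterm i j
    have hdp : d i * P i j ≠ 0 := (mul_pos (hd0 i) hp).ne'
    have : (y i - y j) ^ 2 = 0 := by
      rcases mul_eq_zero.mp this with h | h
      · exact absurd h hdp
      · exact h
    have := pow_eq_zero_iff (n := 2) (by norm_num) |>.mp this
    linarith [sub_eq_zero.mp this]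
  -- nonnegativity of powers
  have hpow0 : ∀ k : ℕ, ∀ i j, 0 ≤ (P ^ k) i j := by
    intro k
    induction k with
    | zero => intro i j; simp [Matrix.one_apply]; positivity
    | succ k ih =>
      intro i j
      rw [pow_succ, Matrix.mul_apply]
      exact Finset.sum_nonneg fun m _ => mul_nonneg (ih i m) (hP0 m j)
  -- propagate along powers
  have hpow : ∀ k : ℕ, ∀ i j, 0 < (P ^ k) i j → y i = y j := by
    intro k
    induction k with
    | zero =>
      intro i j h
      by_cases hij : i = j
      · rw [hij]
      · simp [Matrix.one_apply, hij] at h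
    | succ k ih =>
      intro i j h
      rw [pow_succ, Matrix.mul_apply] at h
      have : ∑ m : n, (0:ℝ) < ∑ m, (P ^ k) i m * P m j := by simpa using h
      obtain ⟨m, -, hm⟩ := Finset.exists_lt_of_sum_lt this
      rcases mul_pos_iff.mp hm with ⟨h1, h2⟩ | ⟨h1, h2⟩
      · exact (ih i m h1).trans (hstep m j h2)
      · exact absurd h1 (not_lt.mpr (hpow0 k i m))
  cases isEmpty_or_nonempty n with
  | inl h => exact ⟨0, fun i => (IsEmpty.false i).elim⟩
  | inr h =>
    obtain ⟨i0⟩ := h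
    refine ⟨y i0, fun i => ?_⟩
    obtain ⟨k, hk⟩ := hirr i i0
    exact hpow k i i0 hk
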